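/- Let u be a unit vector in ℝ^n, let p ∈ ℝ^n with 0 < ‖p‖ ≤ q satisfy ⟨p/‖p‖, u⟩ = −1 + ε for some ε ∈ [ε_min, ε_max] ⊂ (0, 1), and let λ ∈ (0, 2]. Define d = p − ⟨p, u⟩·u, λ^SC = ‖p‖²/‖d‖², and M = q/√(2·ε_min − ε_min²). Then ‖λ^SC·d − λ·p‖² < M² + 4·q². -/

import Mathlib

set_option maxHeartbeats 1000000


open scoped RealInnerProductSpace

/-- For a unit vector `u` and `p` with `0 < ‖p‖ ≤ q`,
`⟪p/‖p‖, u⟫ = -1 + ε`, `ε ∈ [εmin, εmax] ⊂ (0,1)` and `λ ∈ (0,2]`, the outer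
surrogate constraint perturbation vector satisfies
`‖λ^SC • d - λ • p‖² < M² + 4 q²` where `d = p - ⟪p, u⟫ • u`,
`λ^SC = ‖p‖²/‖d‖²` and `M = q/√(2 εmin - εmin²)`. -/
theorem surrogate_constraint_outer_perturbation_bounded {n : ℕ}
    (u : EuclideanSpace ℝ (Fin n)) (hu : ‖u‖ = 1)
    (p : EuclideanSpace ℝ (Fin n)) (q : ℝ)
    (hp0 : 0 < ‖p‖) (hpq : ‖p‖ ≤ q)
    (ε εmin εmax : ℝ)
    (hmin : 0 < εmin) (hε1 : εmin ≤ ε) (hε2 : ε ≤ εmax) (hmax : εmax < 1)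
    (hangle : ⟪‖p‖⁻¹ • p, u⟫ = -1 + ε)
    (lam : ℝ) (hlam0 : 0 < lam) (hlam2 : lam ≤ 2)
    (d : EuclideanSpace ℝ (Fin n)) (hd : d = p - ⟪p, u⟫ • u)
    (lamSC : ℝ) (hlamSC : lamSC = ‖p‖ ^ 2 / ‖d‖ ^ 2)
    (M : ℝ) (hM : M = q / Real.sqrt (2 * εmin - εmin ^ 2)) :
    ‖lamSC • d - lam • p‖ ^ 2 < M ^ 2 + 4 * q ^ 2 := by
  have hpn : (‖p‖ : ℝ) ≠ 0 := ne_of_gt hp0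
  have hc : ⟪p, u⟫ = ‖p‖ * (-1 + ε) := by
    have h := hangle
    rw [real_inner_smul_left] at h
    have h2 : ‖p‖ * (‖p‖⁻¹ * ⟪p, u⟫) = ‖p‖ * (-1 + ε) := by rw [h]
    rwa [← mul_assoc, mul_inv_cancel₀ hpn, one_mul] at h2
  have hε0 : 0 < ε := lt_of_lt_of_le hmin hε1
  have hε1' : ε < 1 := lt_of_le_of_lt hε2 hmax
  have hspos : 0 < 2 * ε - ε ^ 2 := by nlinarith
  have hsmin : 0 < 2 * εmin - εmin ^ 2 := by nlinarith
  have hnd : ‖d‖ ^ 2 = ‖p‖ ^ 2 * (2 * ε - ε ^ 2) := by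
    rw [hd, @norm_sub_sq_real, real_inner_smul_right, norm_smul, hu, mul_one,
      Real.norm_eq_abs, sq_abs, hc]
    ring
  have hndpos : 0 < ‖d‖ ^ 2 := by
    rw [hnd]; positivity
  have hdp : ⟪d, p⟫ = ‖d‖ ^ 2 := by
    have h1 : ⟪d, p⟫ = ‖p‖ ^ 2 - ⟪p, u⟫ * ⟪p, u⟫ := by
      rw [hd, inner_sub_left, real_inner_smul_left, real_inner_comm u p,
        real_inner_self_eq_norm_sq]
    rw [h1, hnd, hc]
    ring
  have hlamSCd : lamSC * ‖d‖ ^ 2 = ‖p‖ ^ 2 := by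
    rw [hlamSC]; exact div_mul_cancel₀ _ (ne_of_gt hndpos)
  have key : ‖lamSC • d - lam • p‖ ^ 2
      = lamSC * ‖p‖ ^ 2 + (lam ^ 2 - 2 * lam) * ‖p‖ ^ 2 := by
    rw [@norm_sub_sq_real, real_inner_smul_left, real_inner_smul_right,
      norm_smul, norm_smul, hdp, mul_pow, mul_pow, Real.norm_eq_abs,
      Real.norm_eq_abs, sq_abs, sq_abs]
    linear_combination (lamSC - 2 * lam) * hlamSCd
  have hM2 : M ^ 2 = q ^ 2 / (2 * εmin - εmin ^ 2) := by
    rw [hM, div_pow, Real.sq_sqrt (le_of_lt hsmin)]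
  have hnp2 : (‖p‖ : ℝ) ^ 2 ≠ 0 := pow_ne_zero 2 hpn
  have hlamSCv : lamSC = 1 / (2 * ε - ε ^ 2) := by
    rw [hlamSC, hnd, div_mul_eq_div_div_swap, div_right_comm, div_self hnp2]
  have h1 : lamSC * ‖p‖ ^ 2 ≤ M ^ 2 := by
    rw [hlamSCv, hM2, one_div_mul_eq_div]
    have hq2 : ‖p‖ ^ 2 ≤ q ^ 2 := by nlinarith
    have hle : 2 * εmin - εmin ^ 2 ≤ 2 * ε - ε ^ 2 := by nlinarith
    gcongr
  have h2 : (lam ^ 2 - 2 * lam) * ‖p‖ ^ 2 ≤ 0 := by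
    have hl : lam ^ 2 - 2 * lam ≤ 0 := by nlinarith
    exact mul_nonpos_of_nonpos_of_nonneg hl (sq_nonneg _)
  have hq : 0 < q := lt_of_lt_of_le hp0 hpq
  have h4 : 0 < 4 * q ^ 2 := by positivity
  rw [key]
  linarith
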